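/- For all integers m ≥ 2 and 2 ≤ l ≤ m, one has Σ_{k=m−l+1}^{m+1} C(2m−k, m) · C(k−1, m−l+1) = C(2m, l−2), where C(p,q) denotes the binomial coefficient (with C(p,q) = 0 when q > p). -/

import Mathlib

lemma sum_choose_col (a n : ℕ) :
    ∑ i ∈ Finset.range (n + 1), i.choose a = (n + 1).choose (a + 1) := by
  induction n with
  | zero =>
      cases a with
      | zero => simp
      | succ a => simp [Nat.choose_eq_zero_of_lt (show 1 < a + 1 + 1 by omega)]
  | succ n ih =>
      rw [Finset.sum_range_succ, ih, Nat.choose_succ_succ (n + 1) a, Nat.add_comm]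

lemma sum_choose_mul_choose (a : ℕ) : ∀ n b,
    ∑ i ∈ Finset.range (n + 1), i.choose a * (n - i).choose b
      = (n + 1).choose (a + b + 1) := by
  intro n
  induction n with
  | zero =>
      intro b
      cases a with
      | zero =>
          cases b with
          | zero => simp
          | succ b => simp [Nat.choose_eq_zero_of_lt (show 1 < b + 1 + 1 by omega)]
      | succ a => simp [Nat.choose_eq_zero_of_lt (show 1 < a + 1 + b + 1 by omega)]
  | succ n ih =>
      intro b
      cases b with
      | zero =>
          simp only [Nat.choose_zero_right, Nat.mul_one]
          rw [sum_choose_col]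
      | succ c =>
          rw [Finset.sum_range_succ, Nat.sub_self, Nat.choose_zero_succ, Nat.mul_zero, Nat.add_zero]
          have h : ∀ i ∈ Finset.range (n + 1),
              i.choose a * (n + 1 - i).choose (c + 1)
                = i.choose a * (n - i).choose c + i.choose a * (n - i).choose (c + 1) := by
            intro i hi
            rw [Finset.mem_range] at hi
            have : n + 1 - i = (n - i) + 1 := by omega
            rw [this, Nat.choose_succ_succ, Nat.mul_add]
          rw [Finset.sum_congr rfl h, Finset.sum_add_distrib, ih c, ih (c + 1)]
          have : a + (c + 1) + 1 = (a + c + 1) + 1 := by omega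
          rw [this]
          exact (Nat.choose_succ_succ (n + 1) (a + c + 1)).symm

/-- `∑_{k=m-l+1}^{m+1} C(2m-k, m) C(k-1, m-l+1) = C(2m, l-2)`. -/
theorem binomial_identity_two (m l : ℕ) (hm : 2 ≤ m) (hl1 : 2 ≤ l) (hl2 : l ≤ m) :
    ∑ k ∈ Finset.Icc (m - l + 1) (m + 1),
        (2 * m - k).choose m * (k - 1).choose (m - l + 1) = (2 * m).choose (l - 2) := by
  set a := m - l + 1 with ha
  -- reindex by i = k - 1
  have himg : Finset.Icc (m - l + 1) (m + 1) = Finset.image (· + 1) (Finset.Icc (m - l) m) := by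
    ext x
    simp only [Finset.mem_Icc, Finset.mem_image]
    constructor
    · intro hx; exact ⟨x - 1, by omega, by omega⟩
    · rintro ⟨y, hy, rfl⟩; omega
  rw [himg, Finset.sum_image (by intro x _ y _ h; simp only at h; omega)]
  have hstep : ∀ i ∈ Finset.Icc (m - l) m,
      (2 * m - (i + 1)).choose m * (i + 1 - 1).choose a
        = i.choose a * (2 * m - 1 - i).choose m := by
    intro i hi
    have h1 : 2 * m - (i + 1) = 2 * m - 1 - i := by omega
    have h2 : i + 1 - 1 = i := by omega
    rw [h1, h2, Nat.mul_comm]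
  rw [Finset.sum_congr rfl hstep]
  -- extend the sum to range (2 * m)
  have hsub : Finset.Icc (m - l) m ⊆ Finset.range (2 * m - 1 + 1) := by
    intro x hx
    simp only [Finset.mem_Icc] at hx
    simp only [Finset.mem_range]
    omega
  have hzero : ∀ i ∈ Finset.range (2 * m - 1 + 1), i ∉ Finset.Icc (m - l) m →
      i.choose a * (2 * m - 1 - i).choose m = 0 := by
    intro i hi hni
    simp only [Finset.mem_range] at hi
    simp only [Finset.mem_Icc, not_and_or, not_le] at hni
    rcases hni with h | h
    · rw [Nat.choose_eq_zero_of_lt (by omega), Nat.zero_mul]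
    · rw [Nat.choose_eq_zero_of_lt (show 2 * m - 1 - i < m by omega), Nat.mul_zero]
  rw [Finset.sum_subset hsub hzero, sum_choose_mul_choose a (2 * m - 1) m]
  have h3 : 2 * m - 1 + 1 = 2 * m := by omega
  have h4 : a + m + 1 = 2 * m - (l - 2) := by omega
  rw [h3, h4, Nat.choose_symm (by omega)]
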